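/- (Theorem 1.) Let n ≥ 1, p ≥ 2, m ≥ 1, k ≥ 1, σ > 0, α ∈ [0,1]. Let X ∈ ℝ^{n×p} have all entries in {0,1} and nonzero columns x_1,…,x_p; let A ∈ ℝ^{p×m}; let G be a partition of {1,…,m} into nonempty groups with |G| ≤ p and with each group size p_g ≤ 2^k − 1; and assume that for each g ∈ G the matrix X_g := X A P_g ∈ ℝ^{n×m} has all entries in {0,1} and at most p_g nonzero columns, where P_g is the diagonal 0/1 matrix selecting the coordinates in g. Let ε ∈ ℝ^n be a random vector with i.i.d. N(0, σ²) entries, let γ* ∈ ℝ^m, β* = Aγ*, and y = Xβ* + ε. Set weights w̃_j = ‖x_j‖/√n for 1 ≤ j ≤ p and w_g = √(p_g/(2^k − 1)) for g ∈ G, define Ω(β, γ) = (1−α) ∑_{j=1}^p w̃_j |β_j| + α ∑_{g∈G} w_g ‖γ_g‖, and let λ ≥ 4 √(2^k − 1) σ √(log p / n). If (β̂, γ̂) minimizes (1/(2n))‖y − Xβ‖² + λ Ω(β, γ) over all (β, γ) with β = Aγ, then with probability at least 1 − 1/p − 2/p², (1/n) ‖Xβ̂ − Xβ*‖² ≤ 4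 λ Ω(β*, γ*). -/

import Mathlib

open Finset Matrix MeasureTheory ProbabilityTheory
open scoped ENNReal

open scoped ENNReal NNReal
open Real


lemma tsla_pdf_complete_sq (V : ℝ≥0) (hV : V ≠ 0) (c x : ℝ) :
    gaussianPDFReal 0 V x * Real.exp (c * x)
      = Real.exp (c ^ 2 * V / 2) * gaussianPDFReal (c * V) V x := by
  have hV0 : (0:ℝ) < V := NNReal.coe_pos.mpr (pos_iff_ne_zero.mpr hV)
  unfold gaussianPDFReal
  have h : -(x - 0) ^ 2 / (2 * V) + c * x = c ^ 2 * V / 2 + -(x - c * V) ^ 2 / (2 * V) := by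
    field_simp
    ring
  calc (√(2 * π * V))⁻¹ * rexp (-(x - 0) ^ 2 / (2 * V)) * rexp (c * x)
      = (√(2 * π * V))⁻¹ * rexp (-(x - 0) ^ 2 / (2 * V) + c * x) := by
        rw [Real.exp_add]; ring
    _ = rexp (c ^ 2 * V / 2) * ((√(2 * π * V))⁻¹ * rexp (-(x - c * V) ^ 2 / (2 * V))) := by
        rw [h, Real.exp_add]; ring

lemma tsla_lint_exp_mul_gaussian (V : ℝ≥0) (c : ℝ) :
    ∫⁻ x, ENNReal.ofReal (Real.exp (c * x)) ∂(gaussianReal 0 V)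
      = ENNReal.ofReal (Real.exp (c ^ 2 * V / 2)) := by
  by_cases hV : V = 0
  · subst hV
    rw [gaussianReal_zero_var]
    rw [lintegral_dirac' _ (by fun_prop)]
    norm_num
  · rw [gaussianReal_of_var_ne_zero _ hV,
      lintegral_withDensity_eq_lintegral_mul _ (measurable_gaussianPDF _ _) (by fun_prop)]
    have heq : ∀ x : ℝ, (gaussianPDF 0 V x * ENNReal.ofReal (Real.exp (c * x)))
        = ENNReal.ofReal (Real.exp (c ^ 2 * V / 2)) * ENNReal.ofReal (gaussianPDFReal (c * V) V x) := by
      intro x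
      rw [gaussianPDF, ← ENNReal.ofReal_mul (gaussianPDFReal_nonneg _ _ _),
        tsla_pdf_complete_sq V hV c x, ENNReal.ofReal_mul (Real.exp_nonneg _)]
    simp only [Pi.mul_apply, heq]
    rw [lintegral_const_mul _ (measurable_gaussianPDFReal _ _).ennreal_ofReal]
    rw [lintegral_gaussianPDFReal_eq_one _ hV, mul_one]

lemma tsla_lint_exp_sq_gaussian (V : ℝ≥0) (a : ℝ) (ha : 0 ≤ a) (h : 2 * a * V < 1) :
    ∫⁻ x, ENNReal.ofReal (Real.exp (a * x ^ 2)) ∂(gaussianReal 0 V)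
      = ENNReal.ofReal (1 / Real.sqrt (1 - 2 * a * V)) := by
  by_cases hV : V = 0
  · subst hV
    rw [gaussianReal_zero_var, lintegral_dirac' _ (by fun_prop)]
    norm_num
  · have hV0 : (0:ℝ) < V := NNReal.coe_pos.mpr (pos_iff_ne_zero.mpr hV)
    set b : ℝ := 1 / (2 * V) - a with hb_def
    have hb : 0 < b := by
      rw [hb_def, sub_pos, lt_div_iff₀ (by positivity)]
      linarith [h]
    rw [gaussianReal_of_var_ne_zero _ hV,
      lintegral_withDensity_eq_lintegral_mul _ (measurable_gaussianPDF _ _) (by fun_prop)]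
    have heq : ∀ x : ℝ, (gaussianPDF 0 V x * ENNReal.ofReal (Real.exp (a * x ^ 2)))
        = ENNReal.ofReal ((√(2 * π * V))⁻¹ * Real.exp (-b * x ^ 2)) := by
      intro x
      rw [gaussianPDF, ← ENNReal.ofReal_mul (gaussianPDFReal_nonneg _ _ _)]
      congr 1
      unfold gaussianPDFReal
      rw [mul_assoc, ← Real.exp_add]
      have hVne : ((V:ℝ)) ≠ 0 := hV0.ne'
      congr 2
      simp only [hb_def]
      field_simp
      ring
    simp only [Pi.mul_apply, heq]
    rw [← ofReal_integral_eq_lintegral_ofReal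
      (((integrable_exp_neg_mul_sq hb).const_mul _))
      (ae_of_all _ (fun x => by positivity))]
    rw [integral_const_mul, integral_gaussian]
    congr 1
    have h2Vb : 1 - 2 * a * V = 2 * V * b := by
      rw [hb_def]; field_simp
    rw [h2Vb]
    rw [← Real.sqrt_inv (2 * π * V), ← Real.sqrt_mul (by positivity), one_div, ← Real.sqrt_inv]
    congr 2
    have hπ : (0:ℝ) < π := Real.pi_pos
    field_simp

lemma tsla_lintegral_pi_prod : ∀ {n : ℕ} (μ : Fin n → Measure ℝ) [∀ i, SigmaFinite (μ i)]
    (f : Fin n → ℝ → ℝ≥0∞) (_hf : ∀ i, Measurable (f i)),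
    ∫⁻ x : Fin n → ℝ, ∏ i, f i (x i) ∂Measure.pi μ = ∏ i, ∫⁻ x, f i x ∂(μ i) := by
  intro n
  induction n with
  | zero =>
      intro μ _ f hf
      simp only [Finset.univ_eq_empty, Finset.prod_empty, lintegral_const, one_mul,
        Measure.pi_empty_univ]
  | succ n ih =>
      intro μ _ f hf
      have hmeasF : Measurable (fun q : ℝ × (Fin n → ℝ) =>
          f 0 q.1 * ∏ j, f (Fin.succ j) (q.2 j)) :=
        ((hf 0).comp measurable_fst).mul
          (Finset.measurable_prod _ (fun j _ =>
            (hf j.succ).comp ((measurable_pi_apply j).comp measurable_snd)))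
      have step1 : ∫⁻ x : Fin (n+1) → ℝ, ∏ i, f i (x i) ∂Measure.pi μ
          = ∫⁻ x : Fin (n+1) → ℝ, (fun q : ℝ × (Fin n → ℝ) =>
              f 0 q.1 * ∏ j, f (Fin.succ j) (q.2 j))
                ((MeasurableEquiv.piFinSuccAbove (fun _ => ℝ) 0) x) ∂Measure.pi μ := by
        congr 1
        ext x
        simp only [MeasurableEquiv.piFinSuccAbove_apply]
        rw [Fin.prod_univ_succ]
        simp [Fin.zero_succAbove, Fin.tail]
      rw [step1, (measurePreserving_piFinSuccAbove μ 0).lintegral_comp hmeasF,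
        lintegral_prod_mul (f := f 0)
          (g := fun y : Fin n → ℝ => ∏ j : Fin n, f j.succ (y j)) ((hf 0).aemeasurable)
          ((Finset.measurable_prod _ (fun i _ =>
            (hf i.succ).comp (measurable_pi_apply i))).aemeasurable),
        ih _ _ (fun i => hf i.succ), Fin.prod_univ_succ]
      simp [Fin.zero_succAbove]

lemma tsla_lint_exp_linear {n : ℕ} (V : ℝ≥0) (c : Fin n → ℝ) :
    ∫⁻ u : Fin n → ℝ, ENNReal.ofReal (Real.exp (∑ i, c i * u i))
        ∂(Measure.pi fun _ : Fin n => gaussianReal 0 V)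
      = ENNReal.ofReal (Real.exp ((∑ i, (c i) ^ 2) * V / 2)) := by
  have h1 : ∀ u : Fin n → ℝ, ENNReal.ofReal (Real.exp (∑ i, c i * u i))
      = ∏ i, ENNReal.ofReal (Real.exp (c i * u i)) := by
    intro u
    rw [Real.exp_sum, ENNReal.ofReal_prod_of_nonneg (fun i _ => Real.exp_nonneg _)]
  simp_rw [h1]
  rw [tsla_lintegral_pi_prod (fun _ => gaussianReal 0 V)
    (fun i (x : ℝ) => ENNReal.ofReal (Real.exp (c i * x))) (fun i => by fun_prop)]
  have h2 : ∀ i : Fin n, ∫⁻ x, ENNReal.ofReal (Real.exp (c i * x)) ∂(gaussianReal 0 V)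
      = ENNReal.ofReal (Real.exp ((c i) ^ 2 * V / 2)) := fun i => tsla_lint_exp_mul_gaussian V (c i)
  simp_rw [h2]
  rw [← ENNReal.ofReal_prod_of_nonneg (fun i _ => Real.exp_nonneg _), ← Real.exp_sum]
  congr 2
  rw [Finset.sum_mul, Finset.sum_div]

lemma tsla_lint_exp_sq_linear {n : ℕ} (V : ℝ≥0) (z : Fin n → ℝ) (a : ℝ) (ha : 0 ≤ a)
    (h : 2 * a * ((∑ i, (z i) ^ 2) * V) < 1) :
    ∫⁻ u : Fin n → ℝ, ENNReal.ofReal (Real.exp (a * (∑ i, z i * u i) ^ 2))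
        ∂(Measure.pi fun _ : Fin n => gaussianReal 0 V)
      = ENNReal.ofReal (1 / Real.sqrt (1 - 2 * a * ((∑ i, (z i) ^ 2) * V))) := by
  classical
  set b : ℝ := Real.sqrt (2 * a) with hb_def
  have hb2 : b ^ 2 = 2 * a := Real.sq_sqrt (by linarith)
  set Pi0 : Measure (Fin n → ℝ) := Measure.pi fun _ : Fin n => gaussianReal 0 V with hPi
  -- linearization identity
  have hlin : ∀ u : Fin n → ℝ, ENNReal.ofReal (Real.exp (a * (∑ i, z i * u i) ^ 2))
      = ∫⁻ ξ : ℝ, ENNReal.ofReal (Real.exp ((b * (∑ i, z i * u i)) * ξ))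
          ∂(gaussianReal 0 1) := by
    intro u
    rw [tsla_lint_exp_mul_gaussian 1 (b * (∑ i, z i * u i))]
    congr 2
    rw [mul_pow, hb2]
    push_cast
    ring
  simp_rw [hlin]
  have hmeas : Measurable (Function.uncurry fun (u : Fin n → ℝ) (ξ : ℝ) =>
      ENNReal.ofReal (Real.exp ((b * (∑ i, z i * u i)) * ξ))) := by
    apply Measurable.ennreal_ofReal
    apply Measurable.exp
    exact ((measurable_const.mul
      (Finset.measurable_sum univ (fun i _ =>
        (by fun_prop)))).mul measurable_snd)
  rw [lintegral_lintegral_swap hmeas.aemeasurable]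
  have hinner : ∀ ξ : ℝ, ∫⁻ u : Fin n → ℝ,
      ENNReal.ofReal (Real.exp ((b * (∑ i, z i * u i)) * ξ)) ∂Pi0
      = ENNReal.ofReal (Real.exp ((a * ((∑ i, (z i) ^ 2) * V)) * ξ ^ 2)) := by
    intro ξ
    have harg : ∀ u : Fin n → ℝ, (b * (∑ i, z i * u i)) * ξ = ∑ i, (b * ξ * z i) * u i := by
      intro u
      rw [Finset.mul_sum]
      rw [Finset.sum_congr rfl (fun i _ => by ring : ∀ i ∈ univ, (b * ξ * z i) * u i = b * (z i * u i) * ξ)]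
      rw [← Finset.sum_mul, ← Finset.mul_sum]
    simp_rw [harg]
    rw [tsla_lint_exp_linear V (fun i => b * ξ * z i)]
    congr 2
    have : ∑ i, (b * ξ * z i) ^ 2 = b ^ 2 * ξ ^ 2 * ∑ i, (z i) ^ 2 := by
      rw [Finset.mul_sum]
      exact Finset.sum_congr rfl (fun i _ => by ring)
    rw [this, hb2]
    ring
  simp_rw [hinner]
  rw [tsla_lint_exp_sq_gaussian 1 (a * ((∑ i, (z i) ^ 2) * V))
    (by positivity) (by push_cast; linarith)]
  congr 3
  push_cast
  ring

lemma tsla_tail {n : ℕ} {ι : Type*} (V : ℝ≥0) (hV : 0 < (V:ℝ))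
    (S : Finset ι) (hS : S.Nonempty) (z : ι → Fin n → ℝ) (v L T : ℝ) (hv : 0 < v)
    (hz : ∀ j ∈ S, ∑ i, (z j i) ^ 2 ≤ v) (hL : 0 ≤ L)
    (hT : 16 * S.card * V * v * L ≤ T) :
    (Measure.pi fun _ : Fin n => gaussianReal 0 V)
      {u | T < ∑ j ∈ S, (∑ i, z j i * u i) ^ 2}
      ≤ ENNReal.ofReal (Real.sqrt 2 * Real.exp (-(4 * L))) := by
  classical
  set μ : Measure (Fin n → ℝ) := Measure.pi fun _ : Fin n => gaussianReal 0 V with hμ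
  have hN0 : (0:ℝ) < S.card := by exact_mod_cast Finset.card_pos.mpr hS
  set N : ℝ := (S.card : ℝ) with hNdef
  set a : ℝ := 1 / (4 * V * v) with ha_def
  have ha : 0 < a := by positivity
  set s : ℝ := a / N with hs_def
  have hs : 0 < s := by positivity
  set Q : (Fin n → ℝ) → ℝ := fun u => ∑ j ∈ S, (∑ i, z j i * u i) ^ 2 with hQdef
  have hQm : Measurable Q := by
    apply Finset.measurable_sum
    intro j _
    exact (Finset.measurable_sum _ (fun i _ =>
      (by fun_prop))).pow_const 2
  set f : (Fin n → ℝ) → ℝ≥0∞ := fun u => ENNReal.ofReal (Real.exp (s * Q u)) with hfdef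
  have hfm : Measurable f := ((hQm.const_mul s).exp).ennreal_ofReal
  -- Step 1: Markov
  have hmarkov : μ {u | T < Q u} ≤ (∫⁻ u, f u ∂μ) / ENNReal.ofReal (Real.exp (s * T)) := by
    have hsub : {u | T < Q u} ⊆ {u | ENNReal.ofReal (Real.exp (s * T)) ≤ f u} := by
      intro u hu
      exact ENNReal.ofReal_le_ofReal (Real.exp_le_exp.mpr
        (mul_le_mul_of_nonneg_left (le_of_lt hu) hs.le))
    refine (measure_mono hsub).trans ?_
    rw [ENNReal.le_div_iff_mul_le (Or.inl (by simp [Real.exp_pos])) (Or.inl ENNReal.ofReal_ne_top)]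
    rw [mul_comm]
    exact mul_meas_ge_le_lintegral₀ hfm.aemeasurable _
  -- Step 2: integral bound
  have hint : (∫⁻ u, f u ∂μ) ≤ ENNReal.ofReal (Real.sqrt 2) := by
    have hptwise : ∀ u, f u ≤ ∑ j ∈ S,
        ENNReal.ofReal ((1 / N) * Real.exp (a * (∑ i, z j i * u i) ^ 2)) := by
      intro u
      have hjensen : Real.exp (s * Q u)
          ≤ ∑ j ∈ S, (1 / N) * Real.exp (a * (∑ i, z j i * u i) ^ 2) := by
        have h₁ : ∑ _j ∈ S, (1 / N : ℝ) = 1 := by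
          rw [Finset.sum_const, nsmul_eq_mul]
          field_simp
          exact hNdef.symm
        have := convexOn_exp.map_sum_le (t := S)
          (w := fun _ => (1 / N : ℝ)) (p := fun j => a * (∑ i, z j i * u i) ^ 2)
          (fun _ _ => by positivity) h₁ (fun _ _ => Set.mem_univ _)
        simp only [smul_eq_mul] at this
        refine le_trans (le_of_eq ?_) this
        congr 1
        rw [hQdef]
        simp only
        rw [Finset.mul_sum]
        refine Finset.sum_congr rfl (fun j _ => ?_)
        rw [hs_def]
        field_simp
      calc f u = ENNReal.ofReal (Real.exp (s * Q u)) := rfl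
        _ ≤ ENNReal.ofReal (∑ j ∈ S, (1 / N) * Real.exp (a * (∑ i, z j i * u i) ^ 2)) :=
            ENNReal.ofReal_le_ofReal hjensen
        _ = ∑ j ∈ S, ENNReal.ofReal ((1 / N) * Real.exp (a * (∑ i, z j i * u i) ^ 2)) :=
            ENNReal.ofReal_sum_of_nonneg (fun j _ => by positivity)
    calc (∫⁻ u, f u ∂μ)
        ≤ ∫⁻ u, ∑ j ∈ S, ENNReal.ofReal ((1 / N) * Real.exp (a * (∑ i, z j i * u i) ^ 2)) ∂μ :=
          lintegral_mono hptwise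
      _ = ∑ j ∈ S, ∫⁻ u, ENNReal.ofReal ((1 / N) * Real.exp (a * (∑ i, z j i * u i) ^ 2)) ∂μ := by
          refine lintegral_finset_sum _ (fun j _ => ?_)
          apply Measurable.ennreal_ofReal
          exact ((((Finset.measurable_sum _ (fun i _ =>
            (by fun_prop))).pow_const 2).const_mul a).exp).const_mul _
      _ ≤ ∑ j ∈ S, ENNReal.ofReal ((1 / N) * Real.sqrt 2) := by
          refine Finset.sum_le_sum (fun j hj => ?_)
          have hSj0 : 0 ≤ ∑ i, (z j i) ^ 2 := Finset.sum_nonneg (fun i _ => sq_nonneg _)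
          have hcond : 2 * a * ((∑ i, (z j i) ^ 2) * V) ≤ 1 / 2 := by
            have h1 : (∑ i, (z j i) ^ 2) * V ≤ v * V :=
              mul_le_mul_of_nonneg_right (hz j hj) V.coe_nonneg
            have h2 : 2 * a * ((∑ i, (z j i) ^ 2) * V) ≤ 2 * a * (v * V) := by
              exact mul_le_mul_of_nonneg_left h1 (by positivity)
            have h3 : 2 * a * (v * V) = 1 / 2 := by
              rw [ha_def]; field_simp; ring
            linarith
          have hcond' : 2 * a * ((∑ i, (z j i) ^ 2) * V) < 1 := by linarith
          have heq : ∀ u : Fin n → ℝ, ENNReal.ofReal ((1 / N) * Real.exp (a * (∑ i, z j i * u i) ^ 2))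
              = ENNReal.ofReal (1 / N) * ENNReal.ofReal (Real.exp (a * (∑ i, z j i * u i) ^ 2)) :=
            fun u => ENNReal.ofReal_mul (by positivity)
          simp_rw [heq]
          rw [lintegral_const_mul _ (by
            apply Measurable.ennreal_ofReal
            exact (((Finset.measurable_sum _ (fun i _ =>
              (by fun_prop))).pow_const 2).const_mul a).exp)]
          rw [hμ, tsla_lint_exp_sq_linear V (fun i => z j i) a ha.le hcond']
          rw [ENNReal.ofReal_mul (by positivity)]
          refine mul_le_mul_of_nonneg_left (ENNReal.ofReal_le_ofReal ?_) zero_le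
          have hpos : (0:ℝ) < 1 - 2 * a * ((∑ i, (z j i) ^ 2) * V) := by linarith
          rw [div_le_iff₀ (Real.sqrt_pos.mpr hpos)]
          rw [← Real.sqrt_mul (by norm_num : (0:ℝ) ≤ 2)]
          have : (1:ℝ) ≤ 2 * (1 - 2 * a * ((∑ i, (z j i) ^ 2) * V)) := by linarith
          calc (1:ℝ) = Real.sqrt 1 := (Real.sqrt_one).symm
            _ ≤ _ := Real.sqrt_le_sqrt this
      _ = ENNReal.ofReal (Real.sqrt 2) := by
          rw [Finset.sum_const, nsmul_eq_mul]
          rw [← ENNReal.ofReal_natCast S.card, ← ENNReal.ofReal_mul (by positivity)]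
          congr 1
          rw [← hNdef]
          field_simp
  -- Step 3: conclude
  refine hmarkov.trans ?_
  refine le_trans (ENNReal.div_le_div_right hint _) ?_
  rw [← ENNReal.ofReal_div_of_pos (Real.exp_pos _)]
  apply ENNReal.ofReal_le_ofReal
  rw [div_eq_mul_inv, ← Real.exp_neg]
  refine mul_le_mul_of_nonneg_left (Real.exp_le_exp.mpr ?_) (Real.sqrt_nonneg 2)
  have hsT : 4 * L ≤ s * T := by
    have h1 : s * (16 * S.card * V * v * L) ≤ s * T := mul_le_mul_of_nonneg_left hT hs.le
    have h2 : s * (16 * S.card * V * v * L) = 4 * L := by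
      rw [hs_def, ha_def, ← hNdef]
      field_simp
      ring
    linarith
  linarith

lemma tsla_abs_sum_le_sqrt (s : Finset ι) (f g : ι → ℝ) :
    |∑ j ∈ s, f j * g j| ≤ Real.sqrt (∑ j ∈ s, f j ^ 2) * Real.sqrt (∑ j ∈ s, g j ^ 2) := by
  have h := sum_mul_sq_le_sq_mul_sq s f g
  have h2 := Real.sqrt_le_sqrt h
  rw [Real.sqrt_sq_eq_abs] at h2
  rwa [Real.sqrt_mul (Finset.sum_nonneg fun i _ => sq_nonneg _)] at h2

lemma tsla_sqrt_triangle (s : Finset ι) (f g : ι → ℝ) :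
    Real.sqrt (∑ j ∈ s, (f j - g j) ^ 2)
      ≤ Real.sqrt (∑ j ∈ s, f j ^ 2) + Real.sqrt (∑ j ∈ s, g j ^ 2) := by
  have hf : (0:ℝ) ≤ ∑ j ∈ s, f j ^ 2 := Finset.sum_nonneg fun i _ => sq_nonneg _
  have hg : (0:ℝ) ≤ ∑ j ∈ s, g j ^ 2 := Finset.sum_nonneg fun i _ => sq_nonneg _
  have hcs : |∑ j ∈ s, f j * g j| ≤ Real.sqrt (∑ j ∈ s, f j ^ 2) * Real.sqrt (∑ j ∈ s, g j ^ 2) :=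
    tsla_abs_sum_le_sqrt s f g
  have hkey : ∑ j ∈ s, (f j - g j) ^ 2
      ≤ (Real.sqrt (∑ j ∈ s, f j ^ 2) + Real.sqrt (∑ j ∈ s, g j ^ 2)) ^ 2 := by
    have hexp : ∑ j ∈ s, (f j - g j) ^ 2
        = ∑ j ∈ s, f j ^ 2 - 2 * ∑ j ∈ s, f j * g j + ∑ j ∈ s, g j ^ 2 := by
      rw [Finset.mul_sum, ← Finset.sum_sub_distrib, ← Finset.sum_add_distrib]
      exact Finset.sum_congr rfl (fun j _ => by ring)
    have hsq1 : Real.sqrt (∑ j ∈ s, f j ^ 2) ^ 2 = ∑ j ∈ s, f j ^ 2 := Real.sq_sqrt hf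
    have hsq2 : Real.sqrt (∑ j ∈ s, g j ^ 2) ^ 2 = ∑ j ∈ s, g j ^ 2 := Real.sq_sqrt hg
    have habs := abs_le.mp hcs
    nlinarith [habs.1, habs.2]
  calc Real.sqrt (∑ j ∈ s, (f j - g j) ^ 2) ≤ Real.sqrt ((Real.sqrt (∑ j ∈ s, f j ^ 2) + Real.sqrt (∑ j ∈ s, g j ^ 2)) ^ 2) :=
        Real.sqrt_le_sqrt hkey
    _ = _ := Real.sqrt_sq (by positivity)

set_option maxHeartbeats 1000000 in
lemma tsla_det
    (n p m k : ℕ) (hn : 1 ≤ n)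
    (α : ℝ) (hα0 : 0 ≤ α) (hα1 : α ≤ 1)
    (X : Matrix (Fin n) (Fin p) ℝ) (A : Matrix (Fin p) (Fin m) ℝ)
    (G : Finset (Finset (Fin m)))
    (hGdisj : ∀ g ∈ G, ∀ g' ∈ G, g ≠ g' → g ∩ g' = ∅)
    (hGcover : G.biUnion id = Finset.univ)
    (hk2 : (0:ℝ) < (2:ℝ) ^ k - 1)
    (γstar : Fin m → ℝ) (βstar : Fin p → ℝ) (hβstar : βstar = A.mulVec γstar)
    (wt : Fin p → ℝ) (hwt : ∀ j, wt j = Real.sqrt (∑ i, X i j ^ 2) / Real.sqrt n)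
    (wg : Finset (Fin m) → ℝ)
    (hwg : ∀ g ∈ G, wg g = Real.sqrt ((g.card : ℝ) / ((2:ℝ) ^ k - 1)))
    (Om : (Fin p → ℝ) → (Fin m → ℝ) → ℝ)
    (hOm : ∀ β γ, Om β γ = (1 - α) * ∑ j, wt j * |β j|
        + α * ∑ g ∈ G, wg g * Real.sqrt (∑ j ∈ g, γ j ^ 2))
    (lam : ℝ) (hlam0 : 0 ≤ lam)
    (e : Fin n → ℝ) (B : Fin p → ℝ) (Γ : Fin m → ℝ) (hB : B = A.mulVec Γ)
    (y : Fin n → ℝ) (hy : y = X.mulVec βstar + e)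
    (hmin1 : (1 / (2 * n)) * ∑ i, (y i - X.mulVec B i) ^ 2 + lam * Om B Γ
      ≤ (1 / (2 * n)) * ∑ i, (y i - X.mulVec βstar i) ^ 2 + lam * Om βstar γstar)
    (hcol : ∀ j, (∑ i, X i j * e i) ^ 2 ≤ lam ^ 2 * n * (∑ i, X i j ^ 2))
    (hgrp : ∀ g ∈ G, ∑ j ∈ g, (∑ i, (X * A) i j * e i) ^ 2
      ≤ lam ^ 2 * n ^ 2 * ((g.card : ℝ) / ((2:ℝ) ^ k - 1))) :
    (1 / n) * ∑ i, (X.mulVec B i - X.mulVec βstar i) ^ 2 ≤ 4 * lam * Om βstar γstar := by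
  have hnR : (0:ℝ) < n := by exact_mod_cast hn
  set d : Fin n → ℝ := fun i => X.mulVec B i - X.mulVec βstar i with hd
  set SD : ℝ := ∑ i, d i ^ 2 with hSD
  set SE : ℝ := ∑ i, e i * d i with hSE
  set c : Fin p → ℝ := fun j => ∑ i, X i j * e i with hc
  set W : Fin m → ℝ := fun j => ∑ i, (X * A) i j * e i with hW
  set Oms : ℝ := Om βstar γstar with hOms
  set OmB : ℝ := Om B Γ with hOmB
  -- basic inequality
  have hyB : ∀ i, y i - X.mulVec B i = e i - d i := by
    intro i; rw [hy]; simp only [Pi.add_apply, hd]; ring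
  have hyS : ∀ i, y i - X.mulVec βstar i = e i := by
    intro i; rw [hy]; simp only [Pi.add_apply]; ring
  have hr1 : ∑ i, (y i - X.mulVec B i) ^ 2 = ∑ i, e i ^ 2 - 2 * SE + SD := by
    simp_rw [hyB]
    rw [hSE, hSD, Finset.mul_sum, ← Finset.sum_sub_distrib, ← Finset.sum_add_distrib]
    exact Finset.sum_congr rfl (fun i _ => by ring)
  have hr0 : ∑ i, (y i - X.mulVec βstar i) ^ 2 = ∑ i, e i ^ 2 := by
    simp_rw [hyS]
  have hbasic : SD ≤ 2 * SE + 2 * n * lam * (Oms - OmB) := by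
    rw [hr1, hr0] at hmin1
    have h1 : (1 / (2 * (n:ℝ))) * (SD - 2 * SE) ≤ lam * (Oms - OmB) := by
      have hexp : (1 / (2 * (n:ℝ))) * (∑ i, e i ^ 2 - 2 * SE + SD)
          = (1 / (2 * n)) * (∑ i, e i ^ 2) + (1 / (2 * n)) * (SD - 2 * SE) := by ring
      rw [hexp] at hmin1
      linarith
    have h2 := mul_le_mul_of_nonneg_left h1 (by positivity : (0:ℝ) ≤ 2 * n)
    have h3 : (2 * (n:ℝ)) * ((1 / (2 * n)) * (SD - 2 * SE)) = SD - 2 * SE := by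
      field_simp
    have h4 : (2 * (n:ℝ)) * (lam * (Oms - OmB)) = 2 * n * lam * (Oms - OmB) := by ring
    linarith
  -- column dual bound
  have hwtnn : ∀ j, 0 ≤ wt j := fun j => by rw [hwt j]; positivity
  have hcabs : ∀ j, |c j| ≤ lam * n * wt j := by
    intro j
    have hv0 : (0:ℝ) ≤ ∑ i, X i j ^ 2 := Finset.sum_nonneg fun i _ => sq_nonneg _
    have h1 : (lam * n * wt j) ^ 2 = lam ^ 2 * n * (∑ i, X i j ^ 2) := by
      rw [hwt j, mul_pow, mul_pow, div_pow, Real.sq_sqrt hv0, Real.sq_sqrt hnR.le]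
      field_simp
    have h2 := Real.sqrt_le_sqrt ((hcol j).trans_eq h1.symm)
    rw [Real.sqrt_sq_eq_abs, Real.sqrt_sq_eq_abs] at h2
    exact h2.trans_eq (abs_of_nonneg (mul_nonneg (mul_nonneg hlam0 hnR.le) (hwtnn j)))
  -- rewrite SE two ways
  have hmulvec : ∀ (v : Fin p → ℝ) i, X.mulVec v i = ∑ j, X i j * v j := by
    intro v i; simp [Matrix.mulVec, dotProduct]
  have hdvec : ∀ i, d i = ∑ j, X i j * (B j - βstar j) := by
    intro i
    rw [hd]
    simp only
    rw [hmulvec, hmulvec, ← Finset.sum_sub_distrib]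
    exact Finset.sum_congr rfl (fun j _ => by ring)
  have hSE1 : SE = ∑ j, (B j - βstar j) * c j := by
    rw [hSE]
    calc ∑ i, e i * d i = ∑ i, ∑ j, e i * (X i j * (B j - βstar j)) := by
          refine Finset.sum_congr rfl (fun i _ => ?_)
          rw [hdvec i, Finset.mul_sum]
      _ = ∑ j, ∑ i, e i * (X i j * (B j - βstar j)) := Finset.sum_comm
      _ = ∑ j, (B j - βstar j) * c j := by
          refine Finset.sum_congr rfl (fun j _ => ?_)
          rw [hc]
          simp only
          rw [Finset.mul_sum]
          exact Finset.sum_congr rfl (fun i _ => by ring)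
  have hmulvec2 : ∀ (v : Fin m → ℝ) i, (X * A).mulVec v i = ∑ j, (X * A) i j * v j := by
    intro v i; simp [Matrix.mulVec, dotProduct]
  have hdvec2 : ∀ i, d i = ∑ j : Fin m, (X * A) i j * (Γ j - γstar j) := by
    intro i
    rw [hd]
    simp only
    rw [hB, hβstar, Matrix.mulVec_mulVec, Matrix.mulVec_mulVec, hmulvec2, hmulvec2,
      ← Finset.sum_sub_distrib]
    exact Finset.sum_congr rfl (fun j _ => by ring)
  have hSE2 : SE = ∑ g ∈ G, ∑ j ∈ g, (Γ j - γstar j) * W j := by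
    have hall : SE = ∑ j : Fin m, (Γ j - γstar j) * W j := by
      rw [hSE]
      calc ∑ i, e i * d i = ∑ i, ∑ j : Fin m, e i * ((X * A) i j * (Γ j - γstar j)) := by
            refine Finset.sum_congr rfl (fun i _ => ?_)
            rw [hdvec2 i, Finset.mul_sum]
        _ = ∑ j : Fin m, ∑ i, e i * ((X * A) i j * (Γ j - γstar j)) := Finset.sum_comm
        _ = ∑ j : Fin m, (Γ j - γstar j) * W j := by
            refine Finset.sum_congr rfl (fun j _ => ?_)
            rw [hW]
            simp only
            rw [Finset.mul_sum]
            exact Finset.sum_congr rfl (fun i _ => by ring)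
    rw [hall]
    have hdisj : (G : Set (Finset (Fin m))).PairwiseDisjoint id := by
      intro g hg g' hg' hne
      simp only [Function.onFun, id_eq]
      rw [Finset.disjoint_iff_inter_eq_empty]
      exact hGdisj g hg g' hg' hne
    rw [← hGcover, Finset.sum_biUnion hdisj]
    rfl
  -- group dual bound
  have hwgnn : ∀ g ∈ G, 0 ≤ wg g := fun g hg => by rw [hwg g hg]; positivity
  have hgabs : ∀ g ∈ G, |∑ j ∈ g, (Γ j - γstar j) * W j|
      ≤ Real.sqrt (∑ j ∈ g, (Γ j - γstar j) ^ 2) * (lam * n * wg g) := by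
    intro g hg
    have h1 := tsla_abs_sum_le_sqrt g (fun j => Γ j - γstar j) W
    have h2 : Real.sqrt (∑ j ∈ g, W j ^ 2) ≤ lam * n * wg g := by
      have hwgsq : (lam * n * wg g) ^ 2 = lam ^ 2 * n ^ 2 * ((g.card : ℝ) / ((2:ℝ) ^ k - 1)) := by
        rw [hwg g hg, mul_pow, mul_pow, Real.sq_sqrt (by positivity)]
      have h3 := Real.sqrt_le_sqrt ((hgrp g hg).trans_eq hwgsq.symm)
      rwa [Real.sqrt_sq (mul_nonneg (mul_nonneg hlam0 hnR.le) (hwgnn g hg))] at h3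
    exact h1.trans (mul_le_mul_of_nonneg_left h2 (Real.sqrt_nonneg _))
  -- the two bounds on |SE|
  set S1 : ℝ := ∑ j, wt j * |B j - βstar j| with hS1
  set S2 : ℝ := ∑ g ∈ G, wg g * Real.sqrt (∑ j ∈ g, (Γ j - γstar j) ^ 2) with hS2
  have hbound1 : SE ≤ lam * n * S1 := by
    refine (le_abs_self SE).trans ?_
    rw [hSE1, hS1]
    refine (Finset.abs_sum_le_sum_abs _ _).trans ?_
    rw [Finset.mul_sum]
    refine Finset.sum_le_sum (fun j _ => ?_)
    rw [abs_mul]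
    calc |B j - βstar j| * |c j| ≤ |B j - βstar j| * (lam * n * wt j) :=
          mul_le_mul_of_nonneg_left (hcabs j) (abs_nonneg _)
      _ = lam * n * (wt j * |B j - βstar j|) := by ring
  have hbound2 : SE ≤ lam * n * S2 := by
    refine (le_abs_self SE).trans ?_
    rw [hSE2, hS2]
    refine (Finset.abs_sum_le_sum_abs _ _).trans ?_
    rw [Finset.mul_sum]
    refine Finset.sum_le_sum (fun g hg => ?_)
    refine (hgabs g hg).trans (le_of_eq ?_)
    ring
  have hcomb : SE ≤ lam * n * ((1 - α) * S1 + α * S2) := by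
    linarith [mul_le_mul_of_nonneg_left hbound1 (sub_nonneg.mpr hα1),
      mul_le_mul_of_nonneg_left hbound2 hα0]
  -- triangle inequality
  have htri : (1 - α) * S1 + α * S2 ≤ OmB + Oms := by
    rw [hOmB, hOms, hOm B Γ, hOm βstar γstar]
    have t1 : S1 ≤ (∑ j, wt j * |B j|) + ∑ j, wt j * |βstar j| := by
      rw [hS1, ← Finset.sum_add_distrib]
      refine Finset.sum_le_sum (fun j _ => ?_)
      have habs : |B j - βstar j| ≤ |B j| + |βstar j| := by
        calc |B j - βstar j| = |B j + -βstar j| := by rw [sub_eq_add_neg]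
          _ ≤ |B j| + |-βstar j| := abs_add_le _ _
          _ = |B j| + |βstar j| := by rw [abs_neg]
      calc wt j * |B j - βstar j| ≤ wt j * (|B j| + |βstar j|) :=
            mul_le_mul_of_nonneg_left habs (hwtnn j)
        _ = wt j * |B j| + wt j * |βstar j| := by ring
    have t2 : S2 ≤ (∑ g ∈ G, wg g * Real.sqrt (∑ j ∈ g, Γ j ^ 2))
        + ∑ g ∈ G, wg g * Real.sqrt (∑ j ∈ g, γstar j ^ 2) := by
      rw [hS2, ← Finset.sum_add_distrib]
      refine Finset.sum_le_sum (fun g hg => ?_)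
      calc wg g * Real.sqrt (∑ j ∈ g, (Γ j - γstar j) ^ 2)
          ≤ wg g * (Real.sqrt (∑ j ∈ g, Γ j ^ 2) + Real.sqrt (∑ j ∈ g, γstar j ^ 2)) :=
            mul_le_mul_of_nonneg_left (tsla_sqrt_triangle g Γ γstar) (hwgnn g hg)
        _ = wg g * Real.sqrt (∑ j ∈ g, Γ j ^ 2) + wg g * Real.sqrt (∑ j ∈ g, γstar j ^ 2) := by
            ring
    linarith [mul_le_mul_of_nonneg_left t1 (sub_nonneg.mpr hα1),
      mul_le_mul_of_nonneg_left t2 hα0]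
  -- conclude
  have hlamn : (0:ℝ) ≤ lam * n := mul_nonneg hlam0 hnR.le
  have hfinal : SD ≤ 4 * n * lam * Oms := by
    linarith [hbasic, hcomb, mul_le_mul_of_nonneg_left htri hlamn]
  have h6 := mul_le_mul_of_nonneg_left hfinal (by positivity : (0:ℝ) ≤ 1 / n)
  have h7 : (1 / (n:ℝ)) * (4 * n * lam * Oms) = 4 * lam * Oms := by
    field_simp
  calc (1 / (n:ℝ)) * ∑ i, (X.mulVec B i - X.mulVec βstar i) ^ 2
      = (1 / (n:ℝ)) * SD := by rw [hSD]
    _ ≤ 4 * lam * Oms := by linarith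



set_option maxHeartbeats 1200000 in
/-- Theorem 1 (TSLA prediction error bound).  With the expanded binary design matrix `X`
(nonzero `{0,1}` columns), reparameterization matrix `A`, a partition `G` of `{1,…,m}`
into groups of size at most `2^k − 1` with `|G| ≤ p` such that each aggregated matrix
`X_g = X A P_g` has `{0,1}` entries and at most `p_g = |g|` nonzero columns, i.i.d.
`N(0,σ²)` noise `ε`, `y = Xβ* + ε` with `β* = Aγ*`, weights `w̃_j = ‖x_j‖/√n` and
`w_g = √(p_g/(2^k − 1))`, penalty `Ω(β,γ) = (1−α)∑_j w̃_j|β_j| + α∑_g w_g‖γ_g‖`, and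
`λ ≥ 4√(2^k−1) σ √(log p / n)`: if `(β̂, γ̂)` minimizes
`(1/(2n))‖y − Xβ‖² + λΩ(β,γ)` subject to `β = Aγ`, then with probability at least
`1 − 1/p − 2/p²` one has `(1/n)‖Xβ̂ − Xβ*‖² ≤ 4λΩ(β*, γ*)`. -/
theorem tsla_prediction_error_bound
    (n p m k : ℕ) (hn : 1 ≤ n) (hp : 2 ≤ p) (hm : 1 ≤ m) (hk : 1 ≤ k)
    (σ : ℝ) (hσ : 0 < σ) (α : ℝ) (hα0 : 0 ≤ α) (hα1 : α ≤ 1)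
    (X : Matrix (Fin n) (Fin p) ℝ)
    (hX01 : ∀ i j, X i j = 0 ∨ X i j = 1)
    (hXcol : ∀ j : Fin p, (fun i => X i j) ≠ 0)
    (A : Matrix (Fin p) (Fin m) ℝ)
    (G : Finset (Finset (Fin m)))
    (hGne : ∀ g ∈ G, g.Nonempty)
    (hGdisj : ∀ g ∈ G, ∀ g' ∈ G, g ≠ g' → g ∩ g' = ∅)
    (hGcover : G.biUnion id = Finset.univ)
    (hGcard : G.card ≤ p)
    (hgsize : ∀ g ∈ G, g.card ≤ 2 ^ k - 1)
    (hXg01 : ∀ g ∈ G, ∀ (i : Fin n) (j : Fin m),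
      (if j ∈ g then (X * A) i j else 0) = 0 ∨ (if j ∈ g then (X * A) i j else 0) = 1)
    (hXgcols : ∀ g ∈ G,
      (Finset.univ.filter fun j : Fin m =>
        (fun i : Fin n => if j ∈ g then (X * A) i j else 0) ≠ 0).card ≤ g.card)
    {Ωs : Type*} [MeasurableSpace Ωs] (P : Measure Ωs) [IsProbabilityMeasure P]
    (ε : Ωs → Fin n → ℝ) (hmeas : Measurable ε)
    (hlaw : Measure.map ε P
      = Measure.pi fun _ : Fin n => gaussianReal 0 ⟨σ ^ 2, sq_nonneg σ⟩)
    (γstar : Fin m → ℝ) (βstar : Fin p → ℝ) (hβstar : βstar = A.mulVec γstar)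
    (y : Ωs → Fin n → ℝ) (hy : ∀ ω, y ω = X.mulVec βstar + ε ω)
    (wt : Fin p → ℝ) (hwt : ∀ j, wt j = Real.sqrt (∑ i, X i j ^ 2) / Real.sqrt n)
    (wg : Finset (Fin m) → ℝ)
    (hwg : ∀ g ∈ G, wg g = Real.sqrt ((g.card : ℝ) / ((2 : ℝ) ^ k - 1)))
    (Om : (Fin p → ℝ) → (Fin m → ℝ) → ℝ)
    (hOm : ∀ β γ, Om β γ
      = (1 - α) * ∑ j, wt j * |β j|
        + α * ∑ g ∈ G, wg g * Real.sqrt (∑ j ∈ g, γ j ^ 2))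
    (lam : ℝ)
    (hlam : lam ≥ 4 * Real.sqrt ((2 : ℝ) ^ k - 1) * σ * Real.sqrt (Real.log p / n))
    (βhat : Ωs → Fin p → ℝ) (γhat : Ωs → Fin m → ℝ)
    (hfeas : ∀ ω, βhat ω = A.mulVec (γhat ω))
    (hmin : ∀ ω, ∀ (β : Fin p → ℝ) (γ : Fin m → ℝ), β = A.mulVec γ →
      (1 / (2 * n)) * ∑ i, (y ω i - X.mulVec (βhat ω) i) ^ 2 + lam * Om (βhat ω) (γhat ω)
        ≤ (1 / (2 * n)) * ∑ i, (y ω i - X.mulVec β i) ^ 2 + lam * Om β γ) :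
    P {ω | (1 / n) * ∑ i, (X.mulVec (βhat ω) i - X.mulVec βstar i) ^ 2
          ≤ 4 * lam * Om βstar γstar}
      ≥ 1 - 1 / (p : ℝ≥0∞) - 2 / (p : ℝ≥0∞) ^ 2 := by
  classical
  have hnR : (0:ℝ) < n := by exact_mod_cast hn
  have hpR : (2:ℝ) ≤ p := by exact_mod_cast hp
  have hp0 : (0:ℝ) < p := by linarith
  set V : ℝ≥0 := ⟨σ ^ 2, sq_nonneg σ⟩ with hVdef
  have hVcoe : (V:ℝ) = σ ^ 2 := rfl
  have hV : (0:ℝ) < V := by rw [hVcoe]; positivity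
  set Pi0 : Measure (Fin n → ℝ) := Measure.pi fun _ : Fin n => gaussianReal 0 V with hPi0
  set L : ℝ := Real.log p with hLdef
  have hL0 : 0 ≤ L := Real.log_nonneg (by linarith)
  have hlam0 : 0 ≤ lam := le_trans (by positivity) hlam
  have h2k1 : (1:ℝ) ≤ (2:ℝ) ^ k - 1 := by
    have h := pow_le_pow_right₀ (by norm_num : (1:ℝ) ≤ 2) hk
    simp only [pow_one] at h
    linarith
  have hk2 : (0:ℝ) < (2:ℝ) ^ k - 1 := by linarith
  have hlamsq : 16 * ((2:ℝ) ^ k - 1) * σ ^ 2 * L ≤ lam ^ 2 * n := by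
    have hLn : (0:ℝ) ≤ L / n := by positivity
    have h1 : (4 * Real.sqrt ((2:ℝ) ^ k - 1) * σ * Real.sqrt (L / n)) ^ 2
        = 16 * ((2:ℝ) ^ k - 1) * σ ^ 2 * (L / n) := by
      rw [mul_pow, mul_pow, mul_pow, Real.sq_sqrt hk2.le, Real.sq_sqrt hLn]
      ring
    have h2 : (4 * Real.sqrt ((2:ℝ) ^ k - 1) * σ * Real.sqrt (L / n)) ^ 2 ≤ lam ^ 2 :=
      pow_le_pow_left₀ (by positivity) hlam 2
    rw [h1] at h2
    have h3 := mul_le_mul_of_nonneg_right h2 hnR.le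
    calc 16 * ((2:ℝ) ^ k - 1) * σ ^ 2 * L
        = 16 * ((2:ℝ) ^ k - 1) * σ ^ 2 * (L / n) * n := by field_simp
      _ ≤ lam ^ 2 * n := h3
  have h16 : 16 * σ ^ 2 * L ≤ lam ^ 2 * n := by
    nlinarith [mul_nonneg (mul_nonneg (by linarith : (0:ℝ) ≤ (2:ℝ) ^ k - 1 - 0) (sq_nonneg σ)) hL0,
      mul_nonneg (mul_nonneg (by linarith : (0:ℝ) ≤ (2:ℝ) ^ k - 1 - 1) (sq_nonneg σ)) hL0]
  -- events
  set Sj : Fin p → Set (Fin n → ℝ) := fun j =>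
    {u | (∑ i, X i j * u i) ^ 2 ≤ lam ^ 2 * n * (∑ i, X i j ^ 2)} with hSj
  set Tg : Finset (Fin m) → Set (Fin n → ℝ) := fun g =>
    {u | ∑ j ∈ g, (∑ i, (X * A) i j * u i) ^ 2
      ≤ lam ^ 2 * n ^ 2 * ((g.card : ℝ) / ((2:ℝ) ^ k - 1))} with hTg
  set Egood : Set (Fin n → ℝ) := (⋂ j, Sj j) ∩ (⋂ g ∈ G, Tg g) with hEgood
  have hSjmeas : ∀ j, MeasurableSet (Sj j) := fun j =>
    measurableSet_le ((Finset.measurable_sum _ fun i _ =>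
      (by fun_prop)).pow_const 2) measurable_const
  have hTgmeas : ∀ g : Finset (Fin m), MeasurableSet (Tg g) := fun g =>
    measurableSet_le (Finset.measurable_sum _ fun j _ =>
      (Finset.measurable_sum _ fun i _ =>
        (by fun_prop)).pow_const 2) measurable_const
  have hEmeas : MeasurableSet Egood :=
    (MeasurableSet.iInter (fun j => hSjmeas j)).inter
      (MeasurableSet.biInter G.countable_toSet (fun g _ => hTgmeas g))
  -- inclusion in the target event
  have hincl : ε ⁻¹' Egood ⊆ {ω | (1 / n) * ∑ i, (X.mulVec (βhat ω) i - X.mulVec βstar i) ^ 2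
      ≤ 4 * lam * Om βstar γstar} := by
    intro ω hω
    obtain ⟨h1, h2⟩ := hω
    have hcolω : ∀ j, (∑ i, X i j * ε ω i) ^ 2 ≤ lam ^ 2 * n * (∑ i, X i j ^ 2) := by
      intro j
      exact Set.mem_iInter.mp h1 j
    have hgrpω : ∀ g ∈ G, ∑ j ∈ g, (∑ i, (X * A) i j * ε ω i) ^ 2
        ≤ lam ^ 2 * n ^ 2 * ((g.card : ℝ) / ((2:ℝ) ^ k - 1)) := by
      intro g hg
      exact Set.mem_iInter₂.mp h2 g hg
    exact tsla_det n p m k hn α hα0 hα1 X A G hGdisj hGcover hk2 γstar βstar hβstar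
      wt hwt wg hwg Om hOm lam hlam0 (ε ω) (βhat ω) (γhat ω) (hfeas ω) (y ω) (hy ω)
      (hmin ω βstar γstar hβstar) hcolω hgrpω
  -- tail bounds
  set cb : ℝ≥0∞ := ENNReal.ofReal (Real.sqrt 2 * Real.exp (-(4 * L))) with hcb
  have hbadcol : ∀ j, Pi0 (Sj j)ᶜ ≤ cb := by
    intro j
    have hex : ∃ i, X i j ≠ 0 := by
      by_contra h
      push_neg at h
      exact hXcol j (funext h)
    obtain ⟨i0, hi0⟩ := hex
    have hone : X i0 j = 1 := (hX01 i0 j).resolve_left hi0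
    have hv : (0:ℝ) < ∑ i, X i j ^ 2 := by
      have hle : (X i0 j) ^ 2 ≤ ∑ i, X i j ^ 2 :=
        Finset.single_le_sum (f := fun i => X i j ^ 2) (fun i _ => sq_nonneg _)
          (Finset.mem_univ i0)
      rw [hone] at hle
      norm_num at hle
      linarith
    have hseteq : (Sj j)ᶜ
        = {u : Fin n → ℝ | lam ^ 2 * n * (∑ i, X i j ^ 2)
            < ∑ j' ∈ ({j} : Finset (Fin p)), (∑ i, X i j' * u i) ^ 2} := by
      ext u
      simp [hSj, not_le, Finset.sum_singleton]
    rw [hseteq]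
    have hT : 16 * (({j} : Finset (Fin p)).card : ℝ) * V * (∑ i, X i j ^ 2) * L
        ≤ lam ^ 2 * n * (∑ i, X i j ^ 2) := by
      rw [Finset.card_singleton, hVcoe]
      push_cast
      nlinarith [mul_le_mul_of_nonneg_right h16 hv.le]
    exact tsla_tail V hV {j} (Finset.singleton_nonempty j) (fun j' i => X i j')
      (∑ i, X i j ^ 2) L _ hv
      (fun j' hj' => by
        rw [Finset.mem_singleton] at hj'
        subst hj'
        exact le_refl _) hL0 hT
  have hbadgrp : ∀ g ∈ G, Pi0 (Tg g)ᶜ ≤ cb := by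
    intro g hg
    set S : Finset (Fin m) := g.filter (fun j => (fun i : Fin n => (X * A) i j) ≠ 0) with hSdef
    have hz01 : ∀ j ∈ g, ∀ i, (X * A) i j = 0 ∨ (X * A) i j = 1 := by
      intro j hj i
      have := hXg01 g hg i j
      rwa [if_pos hj] at this
    have hzn : ∀ j ∈ g, ∑ i, ((X * A) i j) ^ 2 ≤ (n:ℝ) := by
      intro j hj
      calc ∑ i, ((X * A) i j) ^ 2 ≤ ∑ _i : Fin n, (1:ℝ) := by
            refine Finset.sum_le_sum (fun i _ => ?_)
            rcases hz01 j hj i with h | h <;> rw [h] <;> norm_num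
        _ = (n:ℝ) := by simp
    have hzero : ∀ j ∈ g, j ∉ S → ∀ u : Fin n → ℝ, (∑ i, (X * A) i j * u i) = 0 := by
      intro j hj hjS u
      have : ¬ ((fun i : Fin n => (X * A) i j) ≠ 0) := by
        intro hne
        exact hjS (Finset.mem_filter.mpr ⟨hj, hne⟩)
      push_neg at this
      have hzeroj : ∀ i, (X * A) i j = 0 := fun i => congrFun this i
      simp [hzeroj]
    have hsplit : ∀ u : Fin n → ℝ, ∑ j ∈ g, (∑ i, (X * A) i j * u i) ^ 2
        = ∑ j ∈ S, (∑ i, (X * A) i j * u i) ^ 2 := by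
      intro u
      rw [hSdef]
      rw [← Finset.sum_filter_add_sum_filter_not g
        (fun j => (fun i : Fin n => (X * A) i j) ≠ 0) (fun j => (∑ i, (X * A) i j * u i) ^ 2)]
      have : ∑ j ∈ g.filter (fun j => ¬ (fun i : Fin n => (X * A) i j) ≠ 0),
          (∑ i, (X * A) i j * u i) ^ 2 = 0 := by
        refine Finset.sum_eq_zero (fun j hj => ?_)
        rw [Finset.mem_filter] at hj
        have hjS : j ∉ S := by
          rw [hSdef, Finset.mem_filter]
          tauto
        rw [hzero j hj.1 hjS u]
        norm_num
      rw [this, add_zero]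
    have hTnn : (0:ℝ) ≤ lam ^ 2 * n ^ 2 * ((g.card : ℝ) / ((2:ℝ) ^ k - 1)) := by positivity
    by_cases hSne : S.Nonempty
    · have hseteq : (Tg g)ᶜ = {u : Fin n → ℝ |
          lam ^ 2 * n ^ 2 * ((g.card : ℝ) / ((2:ℝ) ^ k - 1))
            < ∑ j ∈ S, (∑ i, (X * A) i j * u i) ^ 2} := by
        ext u
        simp only [hTg, Set.mem_compl_iff, Set.mem_setOf_eq, not_le]
        rw [hsplit u]
      rw [hseteq]
      have hcard : (S.card : ℝ) ≤ (g.card : ℝ) := by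
        exact_mod_cast Finset.card_le_card (Finset.filter_subset _ g)
      have hT : 16 * (S.card : ℝ) * V * (n:ℝ) * L
          ≤ lam ^ 2 * n ^ 2 * ((g.card : ℝ) / ((2:ℝ) ^ k - 1)) := by
        rw [hVcoe]
        have e1 : 16 * (S.card : ℝ) * σ ^ 2 * (n:ℝ) * L
            ≤ 16 * (g.card : ℝ) * σ ^ 2 * (n:ℝ) * L := by
          nlinarith [mul_le_mul_of_nonneg_right hcard
            (by positivity : (0:ℝ) ≤ 16 * σ ^ 2 * (n:ℝ) * L)]
        have e2 : 16 * (g.card : ℝ) * σ ^ 2 * (n:ℝ) * L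
            = (16 * ((2:ℝ) ^ k - 1) * σ ^ 2 * L) * ((n:ℝ) * (g.card : ℝ) / ((2:ℝ) ^ k - 1)) := by
          field_simp
        have e3 : (16 * ((2:ℝ) ^ k - 1) * σ ^ 2 * L) * ((n:ℝ) * (g.card : ℝ) / ((2:ℝ) ^ k - 1))
            ≤ (lam ^ 2 * n) * ((n:ℝ) * (g.card : ℝ) / ((2:ℝ) ^ k - 1)) :=
          mul_le_mul_of_nonneg_right hlamsq (by positivity)
        have e4 : (lam ^ 2 * (n:ℝ)) * ((n:ℝ) * (g.card : ℝ) / ((2:ℝ) ^ k - 1))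
            = lam ^ 2 * n ^ 2 * ((g.card : ℝ) / ((2:ℝ) ^ k - 1)) := by ring
        linarith
      exact tsla_tail V hV S hSne (fun j i => (X * A) i j) (n:ℝ) L _ hnR
        (fun j hj => hzn j (Finset.mem_of_mem_filter j hj)) hL0 hT
    · have : (Tg g)ᶜ = ∅ := by
        rw [Set.compl_empty_iff]
        ext u
        simp only [hTg, Set.mem_setOf_eq, Set.mem_univ, iff_true]
        rw [hsplit u, Finset.not_nonempty_iff_eq_empty.mp hSne]
        simpa using hTnn
      rw [this]
      simp
  -- union bound
  have hcompl : Pi0 Egoodᶜ ≤ (p : ℝ≥0∞) * cb + (p : ℝ≥0∞) * cb := by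
    have hcset : Egoodᶜ = (⋃ j, (Sj j)ᶜ) ∪ (⋃ g ∈ G, (Tg g)ᶜ) := by
      rw [hEgood, Set.compl_inter]
      congr 1
      · simp [Set.compl_iInter]
      · simp [Set.compl_iInter]
    rw [hcset]
    refine (measure_union_le _ _).trans ?_
    have hb1 : Pi0 (⋃ j, (Sj j)ᶜ) ≤ (p : ℝ≥0∞) * cb := by
      refine (measure_iUnion_le _).trans ?_
      rw [tsum_fintype]
      calc ∑ j : Fin p, Pi0 (Sj j)ᶜ ≤ ∑ _j : Fin p, cb := Finset.sum_le_sum (fun j _ => hbadcol j)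
        _ = (p : ℝ≥0∞) * cb := by
            rw [Finset.sum_const, Finset.card_univ, Fintype.card_fin, nsmul_eq_mul]
    have hb2 : Pi0 (⋃ g ∈ G, (Tg g)ᶜ) ≤ (p : ℝ≥0∞) * cb := by
      refine (measure_biUnion_finset_le G _).trans ?_
      calc ∑ g ∈ G, Pi0 (Tg g)ᶜ ≤ ∑ _g ∈ G, cb := Finset.sum_le_sum (fun g hg => hbadgrp g hg)
        _ = (G.card : ℝ≥0∞) * cb := by rw [Finset.sum_const, nsmul_eq_mul]
        _ ≤ (p : ℝ≥0∞) * cb := by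
            refine mul_le_mul_left ?_ cb
            exact_mod_cast hGcard
    exact add_le_add hb1 hb2
  -- numeric bound on the total failure probability
  have hnum : (p : ℝ≥0∞) * cb + (p : ℝ≥0∞) * cb ≤ 1 / (p : ℝ≥0∞) := by
    have hexp4 : Real.exp (-(4 * L)) = ((p:ℝ) ^ 4)⁻¹ := by
      rw [hLdef, ← Real.exp_log (by positivity : (0:ℝ) < (p:ℝ) ^ 4)]
      rw [Real.log_pow]
      rw [← Real.exp_neg]
      norm_num
    have hsqrt2 : Real.sqrt 2 ≤ (3/2 : ℝ) := by
      nlinarith [Real.sq_sqrt (by norm_num : (0:ℝ) ≤ 2), Real.sqrt_nonneg 2]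
    have hmul : (p : ℝ≥0∞) * cb = ENNReal.ofReal ((p:ℝ) * (Real.sqrt 2 * Real.exp (-(4 * L)))) := by
      rw [hcb, ← ENNReal.ofReal_natCast p, ← ENNReal.ofReal_mul (by positivity)]
    have hdivp : 1 / (p : ℝ≥0∞) = ENNReal.ofReal (((p:ℝ))⁻¹) := by
      rw [one_div, ← ENNReal.ofReal_natCast p, ← ENNReal.ofReal_inv_of_pos hp0]
    rw [hmul, hdivp, ← ENNReal.ofReal_add (by positivity) (by positivity)]
    apply ENNReal.ofReal_le_ofReal
    rw [hexp4]
    have h1 : (p:ℝ) * (Real.sqrt 2 * ((p:ℝ) ^ 4)⁻¹) + (p:ℝ) * (Real.sqrt 2 * ((p:ℝ) ^ 4)⁻¹)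
        = (2 * Real.sqrt 2) / (p:ℝ) ^ 3 := by
      field_simp
      ring
    rw [h1, ← one_div]
    rw [div_le_div_iff₀ (by positivity) hp0]
    nlinarith [hsqrt2, hpR, sq_nonneg ((p:ℝ))]
  -- conclude
  have hprob : 1 - 1 / (p : ℝ≥0∞) ≤ Pi0 Egood := by
    rw [tsub_le_iff_right]
    calc (1:ℝ≥0∞) = Pi0 Set.univ := measure_univ.symm
      _ = Pi0 (Egood ∪ Egoodᶜ) := by rw [Set.union_compl_self]
      _ ≤ Pi0 Egood + Pi0 Egoodᶜ := measure_union_le _ _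
      _ ≤ Pi0 Egood + 1 / (p : ℝ≥0∞) := add_le_add le_rfl (hcompl.trans hnum)
  have hmap : P (ε ⁻¹' Egood) = Pi0 Egood := by
    rw [← Measure.map_apply hmeas hEmeas, hlaw]
  have hfinal2 : 1 - 1 / (p : ℝ≥0∞)
      ≤ P {ω | (1 / n) * ∑ i, (X.mulVec (βhat ω) i - X.mulVec βstar i) ^ 2
          ≤ 4 * lam * Om βstar γstar} := by
    calc 1 - 1 / (p : ℝ≥0∞) ≤ Pi0 Egood := hprob
      _ = P (ε ⁻¹' Egood) := hmap.symm
      _ ≤ _ := measure_mono hincl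
  exact le_trans tsub_le_self hfinal2
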